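/- arXiv:2009.10542 — 6 statements merged into one kernel-verified Lean document; each statement's English description precedes it below -/
import Mathlib

section
/- If C is a corpus model (a probability distribution over A*) such that the L¹ norm of the context vector of the empty string is finite, then for every nonempty string x ∈ A*, the context-theoretic probability φ(x̂) = ‖x̂‖₁ / ‖ε̂‖₁ satisfies φ(x̂) < 1, while φ(ε̂) = 1. -/
/-- For a corpus model `C` (a probability distribution over `A*`) with finite
`‖ε̂‖₁`, the context-theoretic probability `φ(x̂) = ‖x̂‖₁ / ‖ε̂‖₁` satisfies `φ(x̂) < 1` for
every nonempty string `x`, while `φ(ε̂) = 1`. -/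
theorem stmt0 (A : Type*) [Fintype A] (C : List A → ℝ)
    (hC : ∀ d, 0 ≤ C d) (hprob : ∑' d : List A, C d = 1)
    (hfin : Summable (fun p : List A × List A => C (p.1 ++ p.2))) :
    (∀ x : List A, x ≠ [] →
      (∑' p : List A × List A, C (p.1 ++ x ++ p.2)) /
        (∑' p : List A × List A, C (p.1 ++ p.2)) < 1) ∧
    (∑' p : List A × List A, C (p.1 ++ ([] : List A) ++ p.2)) /
        (∑' p : List A × List A, C (p.1 ++ p.2)) = 1 := by
  set g : List A × List A → ℝ := fun p => C (p.1 ++ p.2) with hg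
  -- there is a document with positive probability
  obtain ⟨d, hd⟩ : ∃ d, 0 < C d := by
    by_contra h
    push_neg at h
    have : ∀ d, C d = 0 := fun d => le_antisymm (h d) (hC d)
    simp [this] at hprob
  -- the denominator is positive
  have hS : 0 < ∑' p : List A × List A, C (p.1 ++ p.2) := by
    have h1 := Summable.le_tsum hfin (d, ([] : List A)) (fun _ _ => hC _)
    simp only [hg, List.append_nil] at h1
    linarith
  constructor
  · intro x hx
    set f : List A × List A → List A × List A := fun p => (p.1, x ++ p.2) with hf
    have hinj : Function.Injective f := by
      intro p q hpq
      simp only [hf, Prod.mk.injEq] at hpq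
      exact Prod.ext hpq.1 (List.append_cancel_left hpq.2)
    have hnum : (∑' p : List A × List A, C (p.1 ++ x ++ p.2))
        = ∑' q : Set.range f, g q := by
      rw [tsum_range g hinj]
      congr 1
      funext p
      simp [g, hf, List.append_assoc]
    have hsplit : (∑' q : Set.range f, g q) + (∑' q : ((Set.range f)ᶜ : Set (List A × List A)), g q)
        = ∑' p, g p := Summable.tsum_add_tsum_compl (hfin.subtype _) (hfin.subtype _)
    have hmem : (d, ([] : List A)) ∈ (Set.range f)ᶜ := by
      intro ⟨p, hp⟩
      simp only [hf, Prod.mk.injEq] at hp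
      exact hx (List.append_eq_nil_iff.mp hp.2).1
    have hcompl : C d ≤ ∑' q : ((Set.range f)ᶜ : Set (List A × List A)), g q := by
      have := Summable.le_tsum (hfin.subtype ((Set.range f)ᶜ))
        (⟨(d, ([] : List A)), hmem⟩ : ((Set.range f)ᶜ : Set (List A × List A)))
        (fun _ _ => hC _)
      simp [g] at this
      exact this
    rw [div_lt_one hS, hnum]
    have : (∑' q : Set.range f, g q) + C d ≤ ∑' p, g p := by
      rw [← hsplit]; linarith
    linarith
  · simp only [List.append_nil]
    exact div_self (ne_of_gt hS)
end

section
/- Multiplication on the subspace generated by context vectors of a corpus model is well defined independently of the choice of basis: if B₁, B₂ ⊆ A* are two sets of strings whose context vectors each form a basis of the generated subspace, then the bilinear products defined by û·v̂ = (uv)^ on the two bases coincide. -/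
section Aux

variable {A : Type*} (C : List A → ℝ)

private noncomputable def hatF (x : List A) : (List A × List A) → ℝ :=
  fun p => C (p.1 ++ x ++ p.2)

/-- right shift: (shiftR w f) p = f (p.1, w ++ p.2) -/
private noncomputable def shiftR (w : List A) :
    ((List A × List A) → ℝ) →ₗ[ℝ] ((List A × List A) → ℝ) where
  toFun f := fun p => f (p.1, w ++ p.2)
  map_add' _ _ := rfl
  map_smul' _ _ := rfl

/-- left shift: (shiftL u f) p = f (p.1 ++ u, p.2) -/
private noncomputable def shiftL (u : List A) :
    ((List A × List A) → ℝ) →ₗ[ℝ] ((List A × List A) → ℝ) where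
  toFun f := fun p => f (p.1 ++ u, p.2)
  map_add' _ _ := rfl
  map_smul' _ _ := rfl

private lemma shiftR_hat (w u : List A) : shiftR w (hatF C u) = hatF C (u ++ w) := by
  funext p
  simp [shiftR, hatF, List.append_assoc]

private lemma shiftL_hat (u w : List A) : shiftL u (hatF C w) = hatF C (u ++ w) := by
  funext p
  simp [shiftL, hatF, List.append_assoc]

/-- Key lemma: a bilinear map satisfying the product rule on a spanning set `B`
satisfies it on all context vectors. -/
private lemma key (B : Set (List A))
    (hspan : Submodule.span ℝ (hatF C '' B) = Submodule.span ℝ (Set.range (hatF C)))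
    (m : ((List A × List A) → ℝ) →ₗ[ℝ] ((List A × List A) → ℝ) →ₗ[ℝ]
        ((List A × List A) → ℝ))
    (hm : ∀ u ∈ B, ∀ v ∈ B, m (hatF C u) (hatF C v) = hatF C (u ++ v)) :
    ∀ x y : List A, m (hatF C x) (hatF C y) = hatF C (x ++ y) := by
  have hmemV : ∀ x : List A, hatF C x ∈ Submodule.span ℝ (hatF C '' B) := by
    intro x
    rw [hspan]
    exact Submodule.subset_span (Set.mem_range_self x)
  -- Step (a): for b ∈ B and any y, m (hat b) (hat y) = hat (b ++ y)
  have ha : ∀ b ∈ B, ∀ y : List A, m (hatF C b) (hatF C y) = hatF C (b ++ y) := by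
    intro b hb y
    have hagree : ∀ g ∈ Submodule.span ℝ (hatF C '' B),
        m (hatF C b) g = shiftL b g := by
      intro g hg
      induction hg using Submodule.span_induction with
      | mem g hg =>
        obtain ⟨c, hc, rfl⟩ := hg
        rw [hm b hb c hc, shiftL_hat]
      | zero => simp
      | add g₁ g₂ _ _ h1 h2 => simp [h1, h2]
      | smul a g _ h => simp [h]
    rw [hagree (hatF C y) (hmemV y), shiftL_hat]
  -- Step (b): extend to all x in the first argument
  intro x y
  have hagree : ∀ f ∈ Submodule.span ℝ (hatF C '' B),
      m f (hatF C y) = shiftR y f := by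
    intro f hf
    induction hf using Submodule.span_induction with
    | mem f hf =>
      obtain ⟨b, hb, rfl⟩ := hf
      rw [ha b hb y, shiftR_hat]
    | zero => simp
    | add f₁ f₂ _ _ h1 h2 => simp [h1, h2]
    | smul a f _ h => simp [h]
  rw [hagree (hatF C x) (hmemV x), shiftR_hat]

end Aux

/-- Multiplication on the subspace generated by context vectors of a corpus model
is well defined independently of the choice of basis: if `B₁, B₂ ⊆ A*` are two sets of strings
whose context vectors each form a basis of the generated subspace, then the bilinear products
defined by `û·v̂ = (uv)^` on the two bases coincide on the generated subspace. -/
theorem stmt2 (A : Type*) (C : List A → ℝ) :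
    let hat : List A → (List A × List A) → ℝ := fun x p => C (p.1 ++ x ++ p.2)
    let V : Submodule ℝ ((List A × List A) → ℝ) := Submodule.span ℝ (Set.range hat)
    ∀ (B₁ B₂ : Set (List A)),
      LinearIndependent ℝ (fun b : B₁ => hat b.1) →
      Submodule.span ℝ (hat '' B₁) = V →
      LinearIndependent ℝ (fun b : B₂ => hat b.1) →
      Submodule.span ℝ (hat '' B₂) = V →
      ∀ (m₁ m₂ : ((List A × List A) → ℝ) →ₗ[ℝ] ((List A × List A) → ℝ) →ₗ[ℝ]
          ((List A × List A) → ℝ)),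
        (∀ u ∈ B₁, ∀ v ∈ B₁, m₁ (hat u) (hat v) = hat (u ++ v)) →
        (∀ u ∈ B₂, ∀ v ∈ B₂, m₂ (hat u) (hat v) = hat (u ++ v)) →
        ∀ f ∈ V, ∀ g ∈ V, m₁ f g = m₂ f g := by
  intro hat V B₁ B₂ _ hs₁ _ hs₂ m₁ m₂ hm₁ hm₂ f hf g hg
  have hs₁' : Submodule.span ℝ (hatF C '' B₁) = Submodule.span ℝ (Set.range (hatF C)) := hs₁
  have hs₂' : Submodule.span ℝ (hatF C '' B₂) = Submodule.span ℝ (Set.range (hatF C)) := hs₂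
  have h₁ := key C B₁ hs₁' m₁ hm₁
  have h₂ := key C B₂ hs₂' m₂ hm₂
  have hf' : f ∈ Submodule.span ℝ (Set.range (hatF C)) := hf
  have hg' : g ∈ Submodule.span ℝ (Set.range (hatF C)) := hg
  clear hs₁ hs₂ hm₁ hm₂ hs₁' hs₂' hf hg
  induction hf' using Submodule.span_induction with
  | mem f hf =>
    obtain ⟨x, rfl⟩ := hf
    induction hg' using Submodule.span_induction with
    | mem g hg =>
      obtain ⟨y, rfl⟩ := hg
      rw [h₁ x y, h₂ x y]
    | zero => simp
    | add g₁ g₂ _ _ e1 e2 => simp [e1, e2]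
    | smul a g _ e => simp [e]
  | zero => simp
  | add f₁ f₂ _ _ e1 e2 => simp [e1, e2]
  | smul a f _ e => simp [e]
end

section
/- The distance-preserving completion of a tree taxonomy realizes the Jiang–Conrath distance as an ℓ¹ distance: if S is a finite probabilistic taxonomy that is a tree, and ψ' maps each concept x to the vector ∑_{y ≥ x} f_IC(y) e_y where f_IC(y) = IC(y) − IC(Par(y)) (and f_IC(root) = 0), then ‖ψ'(x)‖₁ = IC(x) and ‖ψ'(x) − ψ'(y)‖₁ = IC(x) + IC(y) − 2·IC(x ∨ y), where x ∨ y is the least common subsumer. -/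
/-- The distance-preserving completion of a tree taxonomy realizes the
Jiang–Conrath distance as an ℓ¹ distance: if `S` is a finite probabilistic taxonomy which is
a tree (ancestors of each element form a chain, each non-root element is covered by its
parent, there is a top, and least common subsumers `x ⊔ y` exist) and `ψ'` maps each concept
`x` to `∑_{y ≥ x} f_IC(y) e_y` with `f_IC(y) = IC(y) − IC(Par(y))` and `f_IC(⊤) = 0`, then
`‖ψ'(x)‖₁ = IC(x)` and `‖ψ'(x) − ψ'(y)‖₁ = IC(x) + IC(y) − 2·IC(x ⊔ y)`. -/
theorem stmt12 (S : Type*) [Fintype S] [SemilatticeSup S] [OrderTop S] [DecidableEq S]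
    (Par : S → S) (IC : S → ℝ)
    (hchain : ∀ x : S, IsChain (· ≤ ·) (Set.Ici x))
    (hpar : ∀ y : S, y ≠ ⊤ → y ⋖ Par y)
    (hICtop : IC (⊤ : S) = 0)
    (hICanti : ∀ x y : S, x ≤ y → IC y ≤ IC x) :
    let f : S → ℝ := fun y => if y = ⊤ then 0 else IC y - IC (Par y)
    let ψ : S → S → ℝ := fun x => Set.indicator (Set.Ici x) f
    (∀ x : S, ∑ z, |ψ x z| = IC x) ∧
    (∀ x y : S, ∑ z, |ψ x z - ψ y z| = IC x + IC y - 2 * IC (x ⊔ y)) := by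
  intro f ψ
  classical
  have hf0 : ∀ z : S, 0 ≤ f z := by
    intro z
    by_cases hz : z = ⊤
    · simp [f, hz]
    · have hc := (hpar z hz).1.le
      have := hICanti z (Par z) hc
      simp only [f, if_neg hz]
      linarith
  have hA : ∀ x : S, ∑ z, ψ x z = ∑ z ∈ Finset.univ.filter (fun z => x ≤ z), f z := by
    intro x
    rw [Finset.sum_filter]
    simp [ψ, Set.indicator_apply]
  have hins : ∀ x : S, x ≠ ⊤ →
      Finset.univ.filter (fun z => x ≤ z)
        = insert x (Finset.univ.filter (fun z => Par x ≤ z)) := by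
    intro x hx
    ext z
    simp only [Finset.mem_filter, Finset.mem_univ, true_and, Finset.mem_insert]
    constructor
    · intro hz
      rcases eq_or_ne z x with h | h
      · exact Or.inl h
      · right
        have hcov := hpar x hx
        have hzx : x < z := lt_of_le_of_ne hz (Ne.symm h)
        rcases eq_or_ne z (Par x) with h2 | h2
        · exact h2.ge
        · have hp : Par x ∈ Set.Ici x := hcov.1.le
          have hzm : z ∈ Set.Ici x := hz
          rcases hchain x hzm hp h2 with hle | hle
          · exact absurd (lt_of_le_of_ne hle h2) (hcov.2 hzx)
          · exact hle
    · rintro (rfl | hz)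
      · exact le_refl z
      · exact le_trans (hpar x hx).1.le hz
  have hnotmem : ∀ x : S, x ≠ ⊤ → x ∉ Finset.univ.filter (fun z => Par x ≤ z) := by
    intro x hx
    simp only [Finset.mem_filter, Finset.mem_univ, true_and]
    exact fun h => absurd h (not_le_of_gt (hpar x hx).1)
  have key : ∀ x : S, ∑ z ∈ Finset.univ.filter (fun z => x ≤ z), f z = IC x := by
    intro x
    generalize hn : (Finset.univ.filter (fun z => x ≤ z)).card = n
    induction n using Nat.strong_induction_on generalizing x with
    | _ n ih =>
      by_cases hx : x = ⊤
      · subst hx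
        have htop : Finset.univ.filter (fun z => (⊤ : S) ≤ z) = {⊤} := by
          ext z; simp [top_le_iff, eq_comm]
        rw [htop]
        simp [f, hICtop]
      · have hcard : (Finset.univ.filter (fun z => Par x ≤ z)).card < n := by
          rw [← hn, hins x hx, Finset.card_insert_of_notMem (hnotmem x hx)]
          omega
        rw [hins x hx, Finset.sum_insert (hnotmem x hx), ih _ hcard _ rfl]
        simp only [f, if_neg hx]
        ring
  have hpsi : ∀ x : S, ∑ z, ψ x z = IC x := fun x => (hA x).trans (key x)
  constructor
  · intro x
    have habs : ∀ z, |ψ x z| = ψ x z := fun z =>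
      abs_of_nonneg (Set.indicator_nonneg (fun z _ => hf0 z) z)
    simp_rw [habs]
    exact hpsi x
  · intro x y
    have hpt : ∀ z, |ψ x z - ψ y z| = ψ x z + ψ y z - 2 * ψ (x ⊔ y) z := by
      intro z
      simp only [ψ, Set.indicator_apply, Set.mem_Ici]
      by_cases hx : x ≤ z <;> by_cases hy : y ≤ z
      · have hs : x ⊔ y ≤ z := sup_le hx hy
        simp [hx, hy, hs]
        ring
      · have hs : ¬ x ⊔ y ≤ z := fun h => hy (le_sup_right.trans h)
        (simp [hx, hy, hs, abs_of_nonneg (hf0 z)]; try ring)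
      · have hs : ¬ x ⊔ y ≤ z := fun h => hx (le_sup_left.trans h)
        (simp [hx, hy, hs, abs_of_nonneg (hf0 z)]; try ring)
      · have hs : ¬ x ⊔ y ≤ z := fun h => hx (le_sup_left.trans h)
        simp [hx, hy, hs]
    simp_rw [hpt]
    rw [Finset.sum_sub_distrib, Finset.sum_add_distrib, hpsi, hpsi, ← Finset.mul_sum, hpsi]
end

section
/- The chain completion preserves order and measure: if S is a real-valued taxonomy and 𝒞 = {C₁,…,Cₙ} a covering collection of chains, then the map ξ(x) = ∑_{y ≤ x} ξ₀(y) into ℝⁿ, where ξ₀(y) distributes p(y) equally over the coordinates of chains containing y, is an order embedding (ξ(u) ≤ ξ(v) iff u ≤ v) satisfying ‖ξ(x)‖₁ = p̂(x). -/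
/-- The chain completion preserves order and measure: for a finite real-valued
taxonomy `S` with `p > 0` and a covering collection of chains `C₁,…,Cₙ`, the map
`ξ(x) = ∑_{y ≤ x} ξ₀(y)` into `ℝⁿ` — where `ξ₀(y)` distributes `p(y)` equally over the
coordinates of the chains containing `y` — is an order embedding with `‖ξ(x)‖₁ = p̂(x)`. -/
theorem stmt13 (S : Type*) [Fintype S] [PartialOrder S] [DecidableEq S]
    [DecidableRel ((· ≤ ·) : S → S → Prop)]
    (p : S → ℝ) (hp : ∀ x, 0 < p x) (n : ℕ) (Ch : Fin n → Finset S)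
    (hchain : ∀ i, IsChain (· ≤ ·) ((Ch i : Finset S) : Set S))
    (hcover : ∀ x : S, ∃ i, x ∈ Ch i) :
    let ξ : S → Fin n → ℝ := fun x i => ∑ y ∈ Finset.univ.filter (· ≤ x),
      (if y ∈ Ch i then p y / ((Finset.univ.filter (fun j => y ∈ Ch j)).card : ℝ) else 0)
    (∀ u v : S, ξ u ≤ ξ v ↔ u ≤ v) ∧
    (∀ x : S, ∑ i, |ξ x i| = ∑ y ∈ Finset.univ.filter (· ≤ x), p y) := by
  intro ξ
  set g : S → ℝ := fun y => p y / ((Finset.univ.filter (fun j => y ∈ Ch j)).card : ℝ) with hg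
  have hgpos : ∀ y, 0 < g y := by
    intro y
    obtain ⟨i, hi⟩ := hcover y
    have hcard : 0 < ((Finset.univ.filter (fun j => y ∈ Ch j)).card : ℝ) := by
      have : i ∈ Finset.univ.filter (fun j => y ∈ Ch j) := by simp [hi]
      exact_mod_cast Finset.card_pos.mpr ⟨i, this⟩
    exact div_pos (hp y) hcard
  have hterm_nonneg : ∀ (y : S) (i : Fin n),
      0 ≤ (if y ∈ Ch i then g y else 0) := by
    intro y i
    split
    · exact (hgpos y).le
    · exact le_refl 0
  have hxi : ∀ (x : S) (i : Fin n),
      ξ x i = ∑ y ∈ (Finset.univ.filter (· ≤ x)).filter (· ∈ Ch i), g y := by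
    intro x i
    simp only [ξ, hg, Finset.sum_filter]
  constructor
  · intro u v
    constructor
    · intro h
      by_contra hnot
      obtain ⟨i, hi⟩ := hcover u
      have hsub : (Finset.univ.filter (· ≤ v)).filter (· ∈ Ch i)
          ⊆ (Finset.univ.filter (· ≤ u)).filter (· ∈ Ch i) := by
        intro y hy
        simp only [Finset.mem_filter, Finset.mem_univ, true_and] at hy ⊢
        refine ⟨?_, hy.2⟩
        rcases eq_or_ne y u with rfl | hne
        · exact absurd hy.1 hnot
        · rcases (hchain i).total (by exact_mod_cast hy.2) (by exact_mod_cast hi) with h1 | h1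
          · exact h1
          · exact absurd (le_trans h1 hy.1) hnot
      have hu_mem : u ∈ (Finset.univ.filter (· ≤ u)).filter (· ∈ Ch i) := by
        simp [hi]
      have hu_not : u ∉ (Finset.univ.filter (· ≤ v)).filter (· ∈ Ch i) := by
        simp only [Finset.mem_filter, Finset.mem_univ, true_and, not_and]
        intro hle; exact absurd hle hnot
      have hlt : ξ v i < ξ u i := by
        rw [hxi, hxi]
        exact Finset.sum_lt_sum_of_subset hsub hu_mem hu_not (hgpos u)
          (fun y _ _ => (hgpos y).le)
      exact absurd (h i) (not_le.mpr hlt)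
    · intro h i
      simp only [ξ]
      apply Finset.sum_le_sum_of_subset_of_nonneg
      · intro y hy
        simp only [Finset.mem_filter, Finset.mem_univ, true_and] at hy ⊢
        exact le_trans hy h
      · intro y _ _; exact hterm_nonneg y i
  · intro x
    have habs : ∀ i : Fin n, |ξ x i| = ξ x i := by
      intro i
      exact abs_of_nonneg (Finset.sum_nonneg fun y _ => hterm_nonneg y i)
    simp only [habs, ξ]
    rw [Finset.sum_comm]
    apply Finset.sum_congr rfl
    intro y _
    rw [← Finset.sum_filter, Finset.sum_const, nsmul_eq_mul]
    have hc : ((Finset.univ.filter (fun j => y ∈ Ch j)).card : ℝ) ≠ 0 := by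
      obtain ⟨i, hi⟩ := hcover y
      have : i ∈ Finset.univ.filter (fun j => y ∈ Ch j) := by simp [hi]
      exact_mod_cast (Finset.card_pos.mpr ⟨i, this⟩).ne'
    field_simp
end

section
/- Every bracket semigroup is an inverse semigroup: in the semigroup D(L)*/≡ generated by left connectors |x⟩ and right connectors ⟨x| (x ∈ L) with relations ⟨x||y⟩ = 0 for x ≠ y, ⟨x||x⟩ = 1, and 0 absorbing, each element w = x₁x₂…xₙ has a unique generalized inverse w⁻¹ = xₙ⁻¹…x₁⁻¹ (with |x⟩⁻¹ = ⟨x| and ⟨x|⁻¹ = |x⟩) satisfying w w⁻¹ w = w and w⁻¹ w w⁻¹ = w⁻¹. -/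
namespace Stmt15

open Classical

variable {L : Type*}

abbrev D (L : Type*) := L ⊕ L ⊕ Unit

def ket (x : L) : FreeMonoid (D L) := FreeMonoid.of (Sum.inl x)
def bra (x : L) : FreeMonoid (D L) := FreeMonoid.of (Sum.inr (Sum.inl x))
def z : FreeMonoid (D L) := FreeMonoid.of (Sum.inr (Sum.inr ()))

def rel : FreeMonoid (D L) → FreeMonoid (D L) → Prop := fun a b =>
  (∃ x y : L, x ≠ y ∧ a = bra x * ket y ∧ b = z) ∨
  (∃ x : L, a = bra x * ket x ∧ b = 1) ∨
  (∃ w, a = z * w ∧ b = z) ∨ (∃ w, a = w * z ∧ b = z)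

def c (L : Type*) : Con (FreeMonoid (D L)) := conGen rel

def q (L : Type*) : FreeMonoid (D L) →* (c L).Quotient := (c L).mk'

local notation "q" => q L

lemma q_of_rel {a b : FreeMonoid (D L)} (h : ConGen.Rel rel a b) : q a = q b :=
  (Con.eq _).mpr h

lemma rel_q {a b : FreeMonoid (D L)} (h : rel a b) : q a = q b :=
  q_of_rel (ConGen.Rel.of _ _ h)

lemma z_mul (t : FreeMonoid (D L)) : q (z * t) = q z :=
  rel_q (Or.inr (Or.inr (Or.inl ⟨t, rfl, rfl⟩)))

lemma mul_z (t : FreeMonoid (D L)) : q (t * z) = q z :=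
  rel_q (Or.inr (Or.inr (Or.inr ⟨t, rfl, rfl⟩)))

lemma qz_mul (v : (c L).Quotient) : q z * v = q z := by
  obtain ⟨t, rfl⟩ := Con.mk'_surjective v
  show q z * q t = q z
  rw [← map_mul]; exact z_mul t

lemma mul_qz (v : (c L).Quotient) : v * q z = q z := by
  obtain ⟨t, rfl⟩ := Con.mk'_surjective v
  show q t * q z = q z
  rw [← map_mul]; exact mul_z t

lemma braket_ne {x y : L} (h : x ≠ y) : q (bra x * ket y) = q z :=
  rel_q (Or.inl ⟨x, y, h, rfl, rfl⟩)

lemma braket_eq (x : L) : q (bra x * ket x) = 1 := by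
  rw [show (1 : (c L).Quotient) = q 1 from (map_one _).symm]
  exact rel_q (Or.inr (Or.inl ⟨x, rfl, rfl⟩))

def K (l : List L) : FreeMonoid (D L) := FreeMonoid.ofList (l.map Sum.inl)
def B (l : List L) : FreeMonoid (D L) :=
  FreeMonoid.ofList (l.reverse.map (fun x => Sum.inr (Sum.inl x)))

lemma K_nil : K ([] : List L) = 1 := rfl
lemma B_nil : B ([] : List L) = 1 := rfl
lemma K_cons (a : L) (l : List L) : K (a :: l) = ket a * K l := rfl

lemma K_append (u t : List L) : K (u ++ t) = K u * K t := by
  simp [K, List.map_append, FreeMonoid.ofList_append]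

lemma B_append (u t : List L) : B (u ++ t) = B t * B u := by
  simp [B, List.reverse_append, List.map_append, FreeMonoid.ofList_append]

lemma B_singleton (a : L) : B [a] = bra a := rfl

lemma B_cons (a : L) (l : List L) : B (a :: l) = B l * bra a := by
  rw [show a :: l = [a] ++ l from rfl, B_append, B_singleton]

lemma q_BK (l : List L) : q (B l * K l) = 1 := by
  induction l with
  | nil => simp [B_nil, K_nil]
  | cons a l ih =>
    rw [B_cons, K_cons, show B l * bra a * (ket a * K l) = B l * (bra a * ket a) * K l by
      simp [mul_assoc]]
    rw [map_mul, map_mul, braket_eq, mul_one, ← map_mul, ih]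

lemma congr_mid (a b : FreeMonoid (D L)) {x y : FreeMonoid (D L)} (h : q x = q y) :
    q (a * x * b) = q (a * y * b) := by
  rw [map_mul, map_mul, h, ← map_mul, ← map_mul]

lemma m1 (v t : List L) : q (B v * K (v ++ t)) = q (K t) := by
  rw [K_append, ← mul_assoc, map_mul, q_BK, one_mul]

lemma m2 (a s : List L) : q (B (a ++ s) * K a) = q (B s) := by
  rw [B_append, mul_assoc, map_mul, q_BK, mul_one]

lemma m0 : ∀ v a : List L, ¬ v <+: a → ¬ a <+: v → q (B v * K a) = q z := by
  intro v
  induction v with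
  | nil => intro a h _; exact absurd (List.nil_prefix) h
  | cons x v ih =>
    intro a h1 h2
    cases a with
    | nil => exact absurd (List.nil_prefix) h2
    | cons y a =>
      rw [B_cons, K_cons, show B v * bra x * (ket y * K a) = B v * (bra x * ket y) * K a by
        simp [mul_assoc]]
      by_cases hxy : x = y
      · subst hxy
        rw [congr_mid _ _ (braket_eq x), mul_one]
        exact ih a (fun hp => h1 (List.cons_prefix_cons.mpr ⟨rfl, hp⟩))
          (fun hp => h2 (List.cons_prefix_cons.mpr ⟨rfl, hp⟩))
      · rw [congr_mid _ _ (braket_ne hxy), map_mul, map_mul, mul_qz, qz_mul]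

/-! ### The model by partial maps -/

noncomputable def g : D L → Function.End (Option (List L))
  | Sum.inl x => fun o => o.map (x :: ·)
  | Sum.inr (Sum.inl x) => fun o => o.bind fun l =>
      match l with
      | [] => none
      | y :: t => if y = x then some t else none
  | Sum.inr (Sum.inr _) => fun _ => none

noncomputable def φ (L : Type*) : FreeMonoid (D L) →* Function.End (Option (List L)) :=
  FreeMonoid.lift g

local notation "φ" => φ L

lemma φ_of (x : D L) : φ (FreeMonoid.of x) = g x := rfl
lemma φ_ket (x : L) : φ (ket x) = g (Sum.inl x) := rfl
lemma φ_bra (x : L) : φ (bra x) = g (Sum.inr (Sum.inl x)) := rfl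
lemma φ_z : φ (z : FreeMonoid (D L)) = g (Sum.inr (Sum.inr ())) := rfl

lemma φ_mul_apply (a b : FreeMonoid (D L)) (o : Option (List L)) :
    φ (a * b) o = φ a (φ b o) := by rw [map_mul]; rfl

lemma φ_none (w : FreeMonoid (D L)) : φ w none = none := by
  induction w using FreeMonoid.recOn with
  | one => rfl
  | of_mul x w ihw =>
    rw [φ_mul_apply, ihw, φ_of]
    rcases x with x | x | x <;> rfl

lemma φ_eq {a b : FreeMonoid (D L)} (h : q a = q b) : φ a = φ b := by
  have hle : c L ≤ Con.ker (φ) := by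
    apply Con.conGen_le.mpr
    rintro a b (⟨x, y, hxy, rfl, rfl⟩ | ⟨x, rfl, rfl⟩ | ⟨w, rfl, rfl⟩ | ⟨w, rfl, rfl⟩)
    · show φ _ = φ _
      funext o
      rw [φ_mul_apply, φ_bra, φ_ket, φ_z]
      rcases o with _ | l
      · rfl
      · show (g (Sum.inr (Sum.inl x)) : Function.End _) (some (y :: l)) = none
        simp [g, hxy.symm]
    · show φ _ = φ _
      funext o
      rw [φ_mul_apply, φ_bra, φ_ket, map_one]
      rcases o with _ | l
      · rfl
      · show (g (Sum.inr (Sum.inl x)) : Function.End _) (some (x :: l)) = some l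
        simp [g]
    · show φ _ = φ _
      funext o
      rw [φ_mul_apply, φ_z]
      rfl
    · show φ _ = φ _
      funext o
      rw [φ_mul_apply, φ_z]
      show (φ w) none = _
      rw [φ_none]
      rfl
  exact hle ((Con.eq _).mp h)

lemma φ_K (u : List L) (l : List L) : φ (K u) (some l) = some (u ++ l) := by
  induction u with
  | nil => rfl
  | cons a u ih =>
    rw [K_cons, φ_mul_apply, ih, φ_ket]
    rfl

lemma φ_B (v : List L) : ∀ t : List L,
    φ (B v) (some t) = if v <+: t then some (t.drop v.length) else none := by
  induction v with
  | nil =>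
    intro t
    rw [B_nil, if_pos List.nil_prefix]
    rfl
  | cons a v ih =>
    intro t
    rw [B_cons, φ_mul_apply, φ_bra]
    cases t with
    | nil =>
      rw [show (g (Sum.inr (Sum.inl a)) : Function.End _) (some ([] : List L)) = none from rfl,
        φ_none, if_neg]
      simp
    | cons b t =>
      by_cases hba : b = a
      · subst hba
        rw [show (g (Sum.inr (Sum.inl b)) : Function.End _) (some (b :: t)) = some t by
          simp [g], ih t]
        simp [List.cons_prefix_cons]
      · rw [show (g (Sum.inr (Sum.inl a)) : Function.End _) (some (b :: t)) = none by
          simp [g, hba], φ_none, if_neg]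
        simp only [List.cons_prefix_cons, not_and]
        intro hab
        exact absurd hab.symm hba

lemma φ_nf (u v : List L) (t : List L) :
    φ (K u * B v) (some t) = if v <+: t then some (u ++ t.drop v.length) else none := by
  rw [φ_mul_apply, φ_B]
  split
  · rw [φ_K]
  · exact φ_none _

lemma nf_ne_z (u v : List L) : q (K u * B v) ≠ q z := by
  intro h
  have h2 := congrFun (φ_eq h) (some v)
  rw [φ_nf, if_pos List.prefix_rfl] at h2
  rw [show φ z (some v) = none from rfl] at h2
  exact Option.some_ne_none _ h2

lemma nf_inj {u v u' v' : List L} (h : q (K u * B v) = q (K u' * B v')) : u = u' ∧ v = v' := by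
  have h1 := congrFun (φ_eq h) (some v)
  have h2 := congrFun (φ_eq h.symm) (some v')
  rw [φ_nf, φ_nf, if_pos List.prefix_rfl, List.drop_length] at h1 h2
  by_cases hp : v' <+: v
  · by_cases hp' : v <+: v'
    · have hv : v = v' := hp'.sublist.antisymm hp.sublist
      subst hv
      rw [if_pos List.prefix_rfl, List.drop_length] at h1
      simp only [List.append_nil, Option.some.injEq] at h1
      exact ⟨h1, rfl⟩
    · rw [if_neg hp'] at h2
      exact absurd h2 (Option.some_ne_none _)
  · rw [if_neg hp] at h1
    exact absurd h1 (Option.some_ne_none _)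

/-! ### Normal forms -/

lemma nf_exists (w : FreeMonoid (D L)) :
    q w = q z ∨ ∃ u v : List L, q w = q (K u * B v) := by
  induction w using FreeMonoid.recOn with
  | one => exact Or.inr ⟨[], [], by rw [K_nil, B_nil, one_mul]⟩
  | of_mul x w ihw =>
    rcases ihw with hz | ⟨u, v, h⟩
    · left
      rw [map_mul, hz, ← map_mul, mul_z]
    · rcases x with a | a | a
      · right
        refine ⟨a :: u, v, ?_⟩
        show q (ket a * w) = _
        rw [map_mul, h, ← map_mul, K_cons, mul_assoc]
      · show q (bra a * w) = q z ∨ _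
        cases u with
        | nil =>
          right
          refine ⟨[], v ++ [a], ?_⟩
          rw [map_mul, h, ← map_mul, K_nil, one_mul, one_mul, B_append, B_singleton]
          rfl
        | cons y u =>
          by_cases hay : a = y
          · subst hay
            right
            refine ⟨u, v, ?_⟩
            rw [map_mul, h, ← map_mul, K_cons]
            show q (bra a * (ket a * K u * B v)) = q (K u * B v)
            rw [show bra a * (ket a * K u * B v) = (bra a * ket a) * (K u * B v) by
                simp [mul_assoc], map_mul, braket_eq, one_mul]
          · left
            rw [map_mul, h, ← map_mul, K_cons]
            show q (bra a * (ket y * K u * B v)) = q z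
            rw [show bra a * (ket y * K u * B v) = (bra a * ket y) * (K u * B v) by
                simp [mul_assoc], map_mul, braket_ne hay, qz_mul]
      · left
        show q (z * w) = q z
        exact z_mul w

/-! ### The inverse operation -/

def swp : D L → D L :=
  Sum.elim (fun x => Sum.inr (Sum.inl x))
    (Sum.elim (fun x => Sum.inl x) (fun _ => Sum.inr (Sum.inr ())))

def inv (w : FreeMonoid (D L)) : FreeMonoid (D L) :=
  FreeMonoid.ofList ((FreeMonoid.toList w).reverse.map swp)

lemma inv_mul (a b : FreeMonoid (D L)) : inv (a * b) = inv b * inv a := by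
  simp [inv, FreeMonoid.toList_mul, List.reverse_append, List.map_append,
    FreeMonoid.ofList_append]

lemma inv_one : inv (1 : FreeMonoid (D L)) = 1 := rfl
lemma inv_z : inv (z : FreeMonoid (D L)) = z := rfl
lemma inv_ket (x : L) : inv (ket x) = bra x := rfl
lemma inv_bra (x : L) : inv (bra x) = ket x := rfl

lemma inv_K (u : List L) : inv (K u) = B u := by
  simp only [inv, K, B, FreeMonoid.toList_ofList, ← List.map_reverse, List.map_map]
  rfl

lemma inv_B (v : List L) : inv (B v) = K v := by
  simp only [inv, K, B, FreeMonoid.toList_ofList, ← List.map_reverse, List.map_map,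
    List.reverse_reverse]
  rfl

lemma inv_rel {a b : FreeMonoid (D L)} (h : ConGen.Rel rel a b) : q (inv a) = q (inv b) := by
  induction h with
  | of a b hab =>
    rcases hab with ⟨x, y, hxy, rfl, rfl⟩ | ⟨x, rfl, rfl⟩ | ⟨w, rfl, rfl⟩ | ⟨w, rfl, rfl⟩
    · rw [inv_mul, inv_ket, inv_bra, inv_z]
      exact braket_ne (Ne.symm hxy)
    · rw [inv_mul, inv_ket, inv_bra, inv_one]
      rw [show (q 1 : (c L).Quotient) = 1 from map_one _]
      exact braket_eq x
    · rw [inv_mul, inv_z]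
      exact mul_z _
    · rw [inv_mul, inv_z]
      exact z_mul _
  | refl x => rfl
  | symm _ ih => exact ih.symm
  | trans _ _ ih1 ih2 => exact ih1.trans ih2
  | mul _ _ ih1 ih2 =>
    rename_i w x y z' _ _
    rw [inv_mul, inv_mul, map_mul, map_mul, ih1, ih2]

lemma q_inv {a b : FreeMonoid (D L)} (h : q a = q b) : q (inv a) = q (inv b) :=
  inv_rel ((Con.eq _).mp h)

/-! ### Multiplication of normal forms in the quotient -/

lemma qm1 (u v t v' : List L) :
    q (K u * B v) * q (K (v ++ t) * B v') = q (K (u ++ t) * B v') := by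
  rw [← map_mul, show (K u * B v) * (K (v ++ t) * B v') = K u * (B v * K (v ++ t)) * B v' by
    simp [mul_assoc], congr_mid _ _ (m1 v t), K_append, mul_assoc]

lemma qm2 (u a s v' : List L) :
    q (K u * B (a ++ s)) * q (K a * B v') = q (K u * B (v' ++ s)) := by
  rw [← map_mul, show (K u * B (a ++ s)) * (K a * B v') = K u * (B (a ++ s) * K a) * B v' by
    simp [mul_assoc], congr_mid _ _ (m2 a s), B_append, mul_assoc]

lemma qm0 (u v u' v' : List L) (h1 : ¬ v <+: u') (h2 : ¬ u' <+: v) :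
    q (K u * B v) * q (K u' * B v') = q z := by
  rw [← map_mul, show (K u * B v) * (K u' * B v') = K u * (B v * K u') * B v' by
    simp [mul_assoc], congr_mid _ _ (m0 v u' h1 h2), map_mul, map_mul, mul_qz, qz_mul]

lemma prefix_cases (v a : List L) :
    (∃ s, a = v ++ s) ∨ (∃ s, v = a ++ s) ∨ (¬ v <+: a ∧ ¬ a <+: v) := by
  by_cases h1 : v <+: a
  · obtain ⟨s, hs⟩ := h1
    exact Or.inl ⟨s, hs.symm⟩
  by_cases h2 : a <+: v
  · obtain ⟨s, hs⟩ := h2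
    exact Or.inr (Or.inl ⟨s, hs.symm⟩)
  exact Or.inr (Or.inr ⟨h1, h2⟩)

lemma eq_nil_of_append (l s : List L) (h : l ++ s = l) : s = [] := by
  have := congrArg List.length h
  simp at this
  exact this

/-! ### Main parts -/

lemma qm1' (u v v' : List L) : q (K u * B v) * q (K v * B v') = q (K u * B v') := by
  have := qm1 u v [] v'
  simpa using this

lemma sandwich (u v : List L) :
    q (K u * B v) * q (K v * B u) * q (K u * B v) = q (K u * B v) := by
  rw [qm1', qm1']

lemma inv_nf {w : FreeMonoid (D L)} {u v : List L} (h : q w = q (K u * B v)) :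
    q (inv w) = q (K v * B u) := by
  have := q_inv h
  rwa [inv_mul, inv_K, inv_B] at this

lemma inv_zero {w : FreeMonoid (D L)} (h : q w = q z) : q (inv w) = q z := by
  have := q_inv h
  rwa [inv_z] at this

lemma part1 (w : FreeMonoid (D L)) : q (w * inv w * w) = q w := by
  rcases nf_exists w with hz | ⟨u, v, h⟩
  · rw [map_mul, map_mul, hz, inv_zero hz, ← map_mul, mul_z, ← map_mul, z_mul]
  · rw [map_mul, map_mul, h, inv_nf h, sandwich]

lemma part2 (w : FreeMonoid (D L)) : q (inv w * w * inv w) = q (inv w) := by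
  rcases nf_exists w with hz | ⟨u, v, h⟩
  · rw [map_mul, map_mul, hz, inv_zero hz, ← map_mul, mul_z, ← map_mul, z_mul]
  · rw [map_mul, map_mul, h, inv_nf h, sandwich]

lemma append2_nil {u s r : List L} (h : u ++ s ++ r = u) : s = [] ∧ r = [] := by
  have hl := congrArg List.length h
  rw [List.length_append, List.length_append] at hl
  exact ⟨List.length_eq_zero_iff.mp (by omega), List.length_eq_zero_iff.mp (by omega)⟩

lemma part3 (w : FreeMonoid (D L)) (v : (c L).Quotient)
    (h1 : q w * v * q w = q w) (h2 : v * q w * v = v) : v = q (inv w) := by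
  obtain ⟨t, rfl⟩ := Con.mk'_surjective v
  replace h1 : q w * q t * q w = q w := h1
  replace h2 : q t * q w * q t = q t := h2
  show q t = q (inv w)
  rcases nf_exists w with hz | ⟨u, v₀, h⟩
  · rw [inv_zero hz]
    rw [hz, mul_qz, qz_mul] at h2
    exact h2.symm
  · rw [inv_nf h]
    rcases nf_exists t with htz | ⟨a, b, ht⟩
    · exfalso
      rw [h, htz, mul_qz, qz_mul] at h1
      exact nf_ne_z u v₀ h1.symm
    · rw [ht]
      rw [h, ht] at h1 h2
      suffices hab : a = v₀ ∧ b = u by rw [hab.1, hab.2]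
      rcases prefix_cases v₀ a with ⟨s, rfl⟩ | ⟨s, hv₀⟩ | ⟨hp1, hp2⟩
      · -- a = v₀ ++ s
        rw [qm1 u v₀ s b] at h1
        rcases prefix_cases b u with ⟨r, hu⟩ | ⟨r, hb⟩ | ⟨hp1, hp2⟩
        · -- u = b ++ r
          have hq := qm1 (u ++ s) b r v₀
          rw [← hu] at hq
          rw [hq] at h1
          obtain ⟨he1, -⟩ := nf_inj h1
          obtain ⟨hs, hr⟩ := append2_nil he1
          subst hs; subst hr
          refine ⟨by simp, by rw [hu]; simp⟩
        · -- b = u ++ r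
          rw [hb, qm2 (u ++ s) u r v₀] at h1
          obtain ⟨he1, he2⟩ := nf_inj h1
          have hs : s = [] := eq_nil_of_append u s he1
          have hr : r = [] := eq_nil_of_append v₀ r he2
          subst hs; subst hr
          exact ⟨by simp, by rw [hb]; simp⟩
        · rw [qm0 (u ++ s) b u v₀ hp1 hp2] at h1
          exact absurd h1.symm (nf_ne_z u v₀)
      · -- v₀ = a ++ s
        subst hv₀
        rw [qm2 u a s b] at h1
        have hu : u = b ++ s := by
          rcases prefix_cases (b ++ s) u with ⟨r, hu⟩ | ⟨r, hbs⟩ | ⟨hp1, hp2⟩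
          · rw [hu, qm1 ((b ++ s) ++ r) (b ++ s) r (a ++ s)] at h1
            obtain ⟨he1, -⟩ := nf_inj h1
            have hr : r = [] := eq_nil_of_append ((b ++ s) ++ r) r he1
            subst hr
            rw [hu]; simp
          · rw [hbs, qm2 u u r (a ++ s)] at h1
            obtain ⟨-, he2⟩ := nf_inj h1
            have hr : r = [] := eq_nil_of_append (a ++ s) r he2
            subst hr
            rw [List.append_nil] at hbs
            exact hbs.symm
          · rw [qm0 u (b ++ s) u (a ++ s) hp1 hp2] at h1
            exact absurd h1.symm (nf_ne_z u (a ++ s))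
        rw [hu, qm1 a b s (a ++ s), qm2 (a ++ s) a s b] at h2
        obtain ⟨he1, -⟩ := nf_inj h2
        have hs : s = [] := eq_nil_of_append a s he1
        subst hs
        exact ⟨by simp, by rw [hu]; simp⟩
      · rw [qm0 u v₀ a b hp1 hp2, qz_mul] at h1
        exact absurd h1.symm (nf_ne_z u v₀)

end Stmt15

/-- Every bracket semigroup is an inverse semigroup: in the quotient of the free
monoid on `D(L) = {|x⟩} ∪ {⟨x|} ∪ {0}` by the congruence generated by `⟨x||y⟩ ≡ 0` (`x ≠ y`),
`⟨x||x⟩ ≡ 1` and `0` absorbing, each element `w = x₁…xₙ` has the unique generalized inverse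
`w⁻¹ = xₙ⁻¹…x₁⁻¹` (with `|x⟩⁻¹ = ⟨x|`, `⟨x|⁻¹ = |x⟩`, `0⁻¹ = 0`) satisfying
`w w⁻¹ w = w` and `w⁻¹ w w⁻¹ = w⁻¹`. -/
theorem stmt15 (L : Type*) :
    let ket : L → FreeMonoid (L ⊕ L ⊕ Unit) := fun x => FreeMonoid.of (Sum.inl x)
    let bra : L → FreeMonoid (L ⊕ L ⊕ Unit) := fun x => FreeMonoid.of (Sum.inr (Sum.inl x))
    let z : FreeMonoid (L ⊕ L ⊕ Unit) := FreeMonoid.of (Sum.inr (Sum.inr ()))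
    let rel : FreeMonoid (L ⊕ L ⊕ Unit) → FreeMonoid (L ⊕ L ⊕ Unit) → Prop := fun a b =>
      (∃ x y : L, x ≠ y ∧ a = bra x * ket y ∧ b = z) ∨
      (∃ x : L, a = bra x * ket x ∧ b = 1) ∨
      (∃ w, a = z * w ∧ b = z) ∨ (∃ w, a = w * z ∧ b = z)
    let c : Con (FreeMonoid (L ⊕ L ⊕ Unit)) := conGen rel
    let swap : (L ⊕ L ⊕ Unit) → (L ⊕ L ⊕ Unit) :=
      Sum.elim (fun x => Sum.inr (Sum.inl x))
        (Sum.elim (fun x => Sum.inl x) (fun _ => Sum.inr (Sum.inr ())))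
    let inv : FreeMonoid (L ⊕ L ⊕ Unit) → FreeMonoid (L ⊕ L ⊕ Unit) :=
      fun w => FreeMonoid.ofList ((FreeMonoid.toList w).reverse.map swap)
    ∀ w : FreeMonoid (L ⊕ L ⊕ Unit),
      c.mk' (w * inv w * w) = c.mk' w ∧
      c.mk' (inv w * w * inv w) = c.mk' (inv w) ∧
      ∀ v : c.Quotient, c.mk' w * v * c.mk' w = c.mk' w → v * c.mk' w * v = v →
        v = c.mk' (inv w) := by
  intro ket bra z rel c swap inv w
  exact ⟨Stmt15.part1 w, Stmt15.part2 w, fun v hv1 hv2 => Stmt15.part3 w v hv1 hv2⟩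
end

section
/- A valid link grammar parse yields an idempotent in the free inverse semigroup: if a sequence of disjuncts over link types A forms a link grammar parse (every left connector is matched with a right connector of the same type to its right, every connector matched exactly once, no links cross), then the product in the free inverse semigroup FIS(A) of the corresponding elements (left connector of type a ↦ a, right connector of type a ↦ a⁻¹) is an idempotent. -/
section
variable {S : Type*} [Monoid S]

lemma inv_of_idem (inv : S → S)
    (huniq : ∀ s t : S, s * t * s = s → t * s * t = t → t = inv s)
    (u : S) (hu : u * u = u) : inv u = u :=
  (huniq u u (by rw [hu, hu]) (by rw [hu, hu])).symm

lemma idem_comm (inv : S → S)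
    (hinv : ∀ s : S, s * inv s * s = s ∧ inv s * s * inv s = inv s)
    (huniq : ∀ s t : S, s * t * s = s → t * s * t = t → t = inv s)
    (e f : S) (he : e * e = e) (hf : f * f = f) : e * f = f * e := by
  -- first: e*f is idempotent, and so is f*e (by symmetry)
  have key : ∀ e f : S, e * e = e → f * f = f → (e*f) * (e*f) = e*f := by
    intro e f he hf
    set u := inv (e*f) with hu
    have h1 : (e*f) * (f*u*e) * (e*f) = e*f := by
      have : (e*f) * (f*u*e) * (e*f) = (e*f) * u * (e*f) := by
        calc (e*f) * (f*u*e) * (e*f)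
            = e * (f*f) * u * (e*e) * f := by simp only [mul_assoc]
          _ = e * f * u * (e * f) := by rw [he, hf]; simp only [mul_assoc]
          _ = (e*f) * u * (e*f) := by simp only [mul_assoc]
      rw [this, (hinv (e*f)).1]
    have h2 : (f*u*e) * (e*f) * (f*u*e) = f*u*e := by
      calc (f*u*e) * (e*f) * (f*u*e)
          = f * (u * ((e*e) * ((f*f) * (u * e)))) := by simp only [mul_assoc]
        _ = f * (u * (e * (f * (u * e)))) := by rw [he, hf]
        _ = f * ((u * (e*f) * u) * e) := by simp only [mul_assoc]
        _ = f * (u * e) := by rw [(hinv (e*f)).2]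
        _ = f*u*e := by rw [mul_assoc]
    have hue : f*u*e = u := huniq (e*f) (f*u*e) h1 h2
    -- u is idempotent
    have huid : u * u = u := by
      conv_lhs => rw [← hue]
      calc (f*u*e) * (f*u*e)
          = f * ((u * (e*f) * u) * e) := by simp only [mul_assoc]
        _ = f * (u * e) := by rw [(hinv (e*f)).2]
        _ = u := by rw [← mul_assoc, hue]
    -- e*f = inv u = u, hence idempotent
    have h3 : u * (e*f) * u = u := (hinv (e*f)).2
    have h4 : (e*f) * u * (e*f) = e*f := (hinv (e*f)).1
    have : e*f = inv u := huniq u (e*f) h3 h4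
    rw [this, inv_of_idem inv huniq u huid] at *
    exact huid
  have hef : (e*f)*(e*f) = e*f := key e f he hf
  have hfe : (f*e)*(f*e) = f*e := key f e hf he
  -- fe = inv (ef) = ef
  have h5 : (e*f) * (f*e) * (e*f) = e*f := by
    calc (e*f) * (f*e) * (e*f)
        = e * ((f*f) * ((e*e) * f)) := by simp only [mul_assoc]
      _ = e * (f * (e * f)) := by rw [he, hf]
      _ = (e*f)*(e*f) := by simp only [mul_assoc]
      _ = e*f := hef
  have h6 : (f*e) * (e*f) * (f*e) = f*e := by
    calc (f*e) * (e*f) * (f*e)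
        = f * ((e*e) * ((f*f) * e)) := by simp only [mul_assoc]
      _ = f * (e * (f * e)) := by rw [he, hf]
      _ = (f*e)*(f*e) := by simp only [mul_assoc]
      _ = f*e := hfe
  have h7 : (e*f) * (f*e) * (e*f) = e*f := h5
  have : f*e = inv (e*f) := huniq (e*f) (f*e) h5 h6
  rw [this, inv_of_idem inv huniq (e*f) hef]

end


/-- Matched non-crossing words over the alphabet `A ⊕ A` (where `Sum.inl a` is a left
connector / generator `a` and `Sum.inr a` is a right connector / inverse `a⁻¹`): exactly the
words of the form `a · y · a⁻¹ · z` with `y`, `z` matched non-crossing, or empty. -/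
inductive MNC {A : Type*} : List (A ⊕ A) → Prop
  | nil : MNC []
  | node (a : A) {y z : List (A ⊕ A)} : MNC y → MNC z →
      MNC (Sum.inl a :: (y ++ Sum.inr a :: z))

/-- A valid link grammar parse yields an idempotent in the free inverse
semigroup: the product of the elements corresponding to a matched non-crossing sequence of
connectors (left connector of type `a` ↦ `g a`, right connector of type `a` ↦ `(g a)⁻¹`) is
idempotent in any inverse semigroup (with identity adjoined), in particular in `FIS(A)`. -/
theorem stmt18 {A S : Type*} [Monoid S] (inv : S → S)
    (hinv : ∀ s : S, s * inv s * s = s ∧ inv s * s * inv s = inv s)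
    (huniq : ∀ s t : S, s * t * s = s → t * s * t = t → t = inv s)
    (g : A → S) (l : List (A ⊕ A)) (hl : MNC l) :
    ((l.map (Sum.elim g (fun a => inv (g a)))).prod) *
        ((l.map (Sum.elim g (fun a => inv (g a)))).prod)
      = (l.map (Sum.elim g (fun a => inv (g a)))).prod := by
  induction hl with
  | nil => simp
  | node a hy hz ihy ihz =>
    simp only [List.map_cons, List.map_append, List.prod_cons, List.prod_append,
      Sum.elim_inl, Sum.elim_inr] at *
    set s := g a
    set Py := (List.map (Sum.elim g fun a => inv (g a)) _).prod with hPy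
    set Pz := (List.map (Sum.elim g fun a => inv (g a)) _).prod with hPz
    -- inv s * s is idempotent
    have hss : (inv s * s) * (inv s * s) = inv s * s := by
      rw [← mul_assoc, (hinv s).2]
    -- e := s * Py * inv s is idempotent
    have hcomm := idem_comm inv hinv huniq Py (inv s * s) ihy hss
    have he : (s * Py * inv s) * (s * Py * inv s) = s * Py * inv s := by
      calc (s * Py * inv s) * (s * Py * inv s)
          = s * (Py * (inv s * s)) * (Py * inv s) := by simp only [mul_assoc]
        _ = s * ((inv s * s) * Py) * (Py * inv s) := by rw [hcomm]
        _ = (s * inv s * s) * (Py * Py) * inv s := by simp only [mul_assoc]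
        _ = s * Py * inv s := by rw [(hinv s).1, ihy, mul_assoc]
    have hez := idem_comm inv hinv huniq (s * Py * inv s) Pz he ihz
    have : (s * Py * inv s * Pz) * (s * Py * inv s * Pz) = s * Py * inv s * Pz := by
      calc (s * Py * inv s * Pz) * (s * Py * inv s * Pz)
          = (s * Py * inv s) * (Pz * (s * Py * inv s)) * Pz := by simp only [mul_assoc]
        _ = (s * Py * inv s) * ((s * Py * inv s) * Pz) * Pz := by rw [← hez]
        _ = ((s * Py * inv s) * (s * Py * inv s)) * (Pz * Pz) := by simp only [mul_assoc]
        _ = s * Py * inv s * Pz := by rw [he, ihz]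
    calc s * (Py * (inv s * Pz)) * (s * (Py * (inv s * Pz)))
        = (s * Py * inv s * Pz) * (s * Py * inv s * Pz) := by simp only [mul_assoc]
      _ = s * Py * inv s * Pz := this
      _ = s * (Py * (inv s * Pz)) := by simp only [mul_assoc]
end
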